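/- Let H be a complex Hilbert space and let T, S be bounded operators on H with T self-adjoint and T∘S = S∘T. Assume that for every ε > 0 there exist bounded self-adjoint operators Q, R₁, R₂ on H such that Q∘S is a compact operator, R₁ and R₂ are compact operators, and both T + Q + ε·id + R₁ and Q + ε·id + R₂ − T are positive operators (i.e. the operator inequalities −(Q + ε·id + R₁) ≤ T ≤ Q + ε·id + R₂ hold). Then T∘S*∘S is a compact operator (equivalently, S*∘T∘S is compact). -/

import Mathlib

open ContinuousLinearMap

section Stmt9Aux

open RCLike Metric Set

variable {H : Type*} [NormedAddCommGroup H] [InnerProductSpace ℂ H] [CompleteSpace H]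

local notation "⟪" x ", " y "⟫" => @inner ℂ _ _ x y

private lemma re_ofReal_mul' (r : ℝ) (z : ℂ) : RCLike.re ((r : ℂ) * z) = r * RCLike.re z := by
  simp [Complex.mul_re]

private lemma re_inner_add_left {H : Type*} [NormedAddCommGroup H] [InnerProductSpace ℂ H]
    (u v w : H) : RCLike.re (inner ℂ (u + v) w : ℂ)
      = RCLike.re (inner ℂ u w : ℂ) + RCLike.re (inner ℂ v w : ℂ) := by
  rw [inner_add_left, map_add]

private lemma re_inner_sub_left {H : Type*} [NormedAddCommGroup H] [InnerProductSpace ℂ H]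
    (u v w : H) : RCLike.re (inner ℂ (u - v) w : ℂ)
      = RCLike.re (inner ℂ u w : ℂ) - RCLike.re (inner ℂ v w : ℂ) := by
  rw [inner_sub_left, map_sub]

private lemma re_inner_smul_left' {H : Type*} [NormedAddCommGroup H] [InnerProductSpace ℂ H]
    (r : ℝ) (u w : H) : RCLike.re (inner ℂ ((r : ℂ) • u) w : ℂ)
      = r * RCLike.re (inner ℂ u w : ℂ) := by
  rw [inner_smul_left, Complex.conj_ofReal, re_ofReal_mul']

private lemma cpt_lcomp {f : H →L[ℂ] H} (h : IsCompactOperator f) (g : H →L[ℂ] H) :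
    IsCompactOperator (g.comp f) := by
  rw [coe_comp']; exact h.clm_comp g

private lemma cpt_rcomp {f : H →L[ℂ] H} (h : IsCompactOperator f) (g : H →L[ℂ] H) :
    IsCompactOperator (f.comp g) := by
  rw [coe_comp']; exact h.comp_clm g

private lemma cpt_add {f g : H →L[ℂ] H} (hf : IsCompactOperator f)
    (hg : IsCompactOperator g) : IsCompactOperator (f + g) := by
  rw [coe_add']; exact hf.add hg

private lemma cpt_sub {f g : H →L[ℂ] H} (hf : IsCompactOperator f)
    (hg : IsCompactOperator g) : IsCompactOperator (f - g) := by
  rw [coe_sub']; exact hf.sub hg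

private lemma pos_cauchy_schwarz {A : H →L[ℂ] H} (hA : A.IsPositive) (x y : H) :
    (re ⟪A x, y⟫) ^ 2 ≤ re ⟪A x, x⟫ * re ⟪A y, y⟫ := by
  have hsym : ∀ u v : H, ⟪A u, v⟫ = ⟪u, A v⟫ := by
    intro u v
    simpa using (isSelfAdjoint_iff_isSymmetric.mp hA.isSelfAdjoint) u v
  have hre : ∀ u v : H, re ⟪A v, u⟫ = re ⟪A u, v⟫ := by
    intro u v
    rw [hsym v u, ← inner_conj_symm, RCLike.conj_re]
  have key : ∀ t : ℝ, 0 ≤ (re ⟪A y, y⟫) * (t * t) + (2 * re ⟪A x, y⟫) * t + re ⟪A x, x⟫ := by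
    intro t
    have h0 := hA.re_inner_nonneg_left (x + (t : ℂ) • y)
    have e2 : ⟪A (x + (t : ℂ) • y), x + (t : ℂ) • y⟫
        = ⟪A x, x⟫ + (t : ℂ) * ⟪A x, y⟫ + (t : ℂ) * ⟪A y, x⟫
          + (t : ℂ) * ((t : ℂ) * ⟪A y, y⟫) := by
      rw [map_add, map_smul]
      simp only [inner_add_left, inner_add_right, inner_smul_left, inner_smul_right,
        Complex.conj_ofReal]
      ring
    have hexp : re ⟪A (x + (t : ℂ) • y), x + (t : ℂ) • y⟫
        = re ⟪A x, x⟫ + t * re ⟪A x, y⟫ + t * re ⟪A y, x⟫ + t * (t * re ⟪A y, y⟫) := by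
      rw [e2, map_add, map_add, map_add, re_ofReal_mul', re_ofReal_mul', re_ofReal_mul',
        re_ofReal_mul']
    rw [hexp, hre x y] at h0
    nlinarith [h0]
  have hd := discrim_le_zero key
  rw [discrim] at hd
  nlinarith [hd]

private lemma pos_norm_le {A : H →L[ℂ] H} (hA : A.IsPositive) {M : ℝ} (hM : 0 ≤ M)
    (h : ∀ x : H, ‖x‖ ≤ 1 → re ⟪A x, x⟫ ≤ M) : ‖A‖ ≤ M := by
  have h' : ∀ x : H, re ⟪A x, x⟫ ≤ M * ‖x‖ ^ 2 := by
    intro x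
    rcases eq_or_ne x 0 with rfl | hx
    · simp
    · have hnx : (0 : ℝ) < ‖x‖ := norm_pos_iff.mpr hx
      have hu : ‖(((‖x‖⁻¹ : ℝ) : ℂ)) • x‖ ≤ 1 := by
        rw [norm_smul, Complex.norm_real, Real.norm_eq_abs,
          abs_of_pos (inv_pos.mpr hnx), inv_mul_cancel₀ hnx.ne']
      have hux := h _ hu
      rw [map_smul, inner_smul_left, inner_smul_right, Complex.conj_ofReal,
        re_ofReal_mul', re_ofReal_mul'] at hux
      have hre2 : re ⟪A x, x⟫
          = (‖x‖ * ‖x‖) * (‖x‖⁻¹ * (‖x‖⁻¹ * re ⟪A x, x⟫)) := by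
        field_simp
      have h9 : (‖x‖ * ‖x‖) * (‖x‖⁻¹ * (‖x‖⁻¹ * re ⟪A x, x⟫))
          ≤ (‖x‖ * ‖x‖) * M := mul_le_mul_of_nonneg_left hux (by positivity)
      nlinarith [h9, hre2]
  have hAx : ∀ x : H, ‖A x‖ ^ 2 ≤ (M * ‖A‖) * ‖x‖ ^ 2 := by
    intro x
    rcases eq_or_ne (A x) 0 with h0 | h0
    · rw [h0]
      have : (0:ℝ) ≤ (M * ‖A‖) * ‖x‖ ^ 2 := by positivity
      simpa using this
    · have hcs := pos_cauchy_schwarz hA x (A x)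
      have h1 : re ⟪A x, A x⟫ = ‖A x‖ ^ 2 := inner_self_eq_norm_sq _
      have h2 : re ⟪A (A x), A x⟫ ≤ ‖A‖ * ‖A x‖ ^ 2 := by
        calc re ⟪A (A x), A x⟫ ≤ ‖⟪A (A x), A x⟫‖ := RCLike.re_le_norm _
        _ ≤ ‖A (A x)‖ * ‖A x‖ := norm_inner_le_norm _ _
        _ ≤ (‖A‖ * ‖A x‖) * ‖A x‖ := by gcongr; exact A.le_opNorm _
        _ = ‖A‖ * ‖A x‖ ^ 2 := by ring
      have h3 := h' x
      have h2' : 0 ≤ re ⟪A (A x), A x⟫ := hA.re_inner_nonneg_left (A x)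
      have h4 : ‖A x‖ ^ 2 * ‖A x‖ ^ 2 ≤ (M * ‖x‖ ^ 2) * (‖A‖ * ‖A x‖ ^ 2) := by
        calc ‖A x‖ ^ 2 * ‖A x‖ ^ 2 = (re ⟪A x, A x⟫) ^ 2 := by rw [h1]; ring
        _ ≤ re ⟪A x, x⟫ * re ⟪A (A x), A x⟫ := hcs
        _ ≤ (M * ‖x‖ ^ 2) * (‖A‖ * ‖A x‖ ^ 2) := by
            apply mul_le_mul h3 h2 h2'
            positivity
      have hpos : (0:ℝ) < ‖A x‖ ^ 2 := by
        have := norm_pos_iff.mpr h0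
        positivity
      have h5 : ‖A x‖ ^ 2 * ‖A x‖ ^ 2 ≤ ((M * ‖A‖) * ‖x‖ ^ 2) * ‖A x‖ ^ 2 := by
        nlinarith [h4]
      exact le_of_mul_le_mul_right h5 hpos
  have hb : ‖A‖ ≤ Real.sqrt (M * ‖A‖) := by
    apply opNorm_le_bound _ (Real.sqrt_nonneg _)
    intro x
    have h6 : ‖A x‖ ^ 2 ≤ (Real.sqrt (M * ‖A‖) * ‖x‖) ^ 2 := by
      rw [mul_pow, Real.sq_sqrt (by positivity)]
      exact hAx x
    have h7 := Real.sqrt_le_sqrt h6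
    rwa [Real.sqrt_sq (norm_nonneg _), Real.sqrt_sq (by positivity)] at h7
  rcases eq_or_lt_of_le (norm_nonneg A) with h0 | h0
  · rw [← h0]; exact hM
  · have h8 : ‖A‖ ^ 2 ≤ M * ‖A‖ := by
      nlinarith [hb, Real.sq_sqrt (show (0:ℝ) ≤ M * ‖A‖ by positivity),
        Real.sqrt_nonneg (M * ‖A‖), norm_nonneg A]
    nlinarith [h8, h0]

private lemma finproj_compact (W : Submodule ℂ H) [FiniteDimensional ℂ W] :
    IsCompactOperator (W.subtypeL.comp (W.orthogonalProjectionOnto)) := by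
  have hps : ProperSpace W := FiniteDimensional.proper ℂ W
  refine ⟨W.subtypeL '' closedBall 0 (‖(W.orthogonalProjectionOnto : H →L[ℂ] W)‖ + 1),
    (isCompact_closedBall _ _).image W.subtypeL.continuous, ?_⟩
  refine Filter.mem_of_superset (Metric.ball_mem_nhds 0 one_pos) (fun x hx => ?_)
  refine ⟨W.orthogonalProjectionOnto x, ?_, rfl⟩
  rw [mem_closedBall, dist_zero_right]
  have h1 : ‖W.orthogonalProjectionOnto x‖ ≤ ‖(W.orthogonalProjectionOnto : H →L[ℂ] W)‖ * ‖x‖ :=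
    le_opNorm _ _
  have hx' : ‖x‖ < 1 := by rwa [mem_ball, dist_zero_right] at hx
  nlinarith [norm_nonneg (W.orthogonalProjectionOnto : H →L[ℂ] W), norm_nonneg x]

end Stmt9Aux

set_option maxHeartbeats 3000000 in
/-- Abstract compactness argument behind the Kasparov-cycle property: if a
bounded self-adjoint operator `T` commutes with `S`, and for every `ε > 0`
there are self-adjoint operators `Q, R₁, R₂` with `Q ∘ S`, `R₁`, `R₂` compact
and `−(Q + ε + R₁) ≤ T ≤ Q + ε + R₂`, then `T ∘ S* ∘ S` is compact. -/
theorem stmt_9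
    {H : Type*} [NormedAddCommGroup H] [InnerProductSpace ℂ H] [CompleteSpace H]
    (T S : H →L[ℂ] H)
    (hT : IsSelfAdjoint T)
    (hTS : T.comp S = S.comp T)
    (hyp : ∀ ε : ℝ, 0 < ε → ∃ Q R₁ R₂ : H →L[ℂ] H,
      IsSelfAdjoint Q ∧ IsSelfAdjoint R₁ ∧ IsSelfAdjoint R₂ ∧
      IsCompactOperator (Q.comp S) ∧ IsCompactOperator R₁ ∧ IsCompactOperator R₂ ∧
      (T + (Q + (ε : ℂ) • (1 : H →L[ℂ] H) + R₁)).IsPositive ∧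
      ((Q + (ε : ℂ) • (1 : H →L[ℂ] H) + R₂) - T).IsPositive) :
    IsCompactOperator (T.comp ((ContinuousLinearMap.adjoint S).comp S)) := by
  classical
  have hadjT : ContinuousLinearMap.adjoint T = T := hT.adjoint_eq
  have hcomm : (ContinuousLinearMap.adjoint S).comp T
      = T.comp (ContinuousLinearMap.adjoint S) := by
    have h := congrArg ContinuousLinearMap.adjoint hTS
    rw [adjoint_comp, adjoint_comp, hadjT] at h
    exact h
  have hgoal : T.comp ((ContinuousLinearMap.adjoint S).comp S)
      = ((ContinuousLinearMap.adjoint S).comp T).comp S := by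
    rw [← comp_assoc, ← hcomm]
  rw [hgoal]
  set X := ((ContinuousLinearMap.adjoint S).comp T).comp S with hXdef
  set B := (ContinuousLinearMap.adjoint S).comp S with hBdef
  suffices hcl : X ∈ closure {f : H →L[ℂ] H | IsCompactOperator f} by
    exact isClosed_setOf_isCompactOperator.closure_subset hcl
  rw [Metric.mem_closure_iff]
  intro δ hδ
  have hb5 : (0:ℝ) < 5 * (‖B‖ + 1) := by positivity
  set ε := δ / (5 * (‖B‖ + 1)) with hεdef
  have hε : 0 < ε := div_pos hδ hb5
  have hεδ : ε * (5 * (‖B‖ + 1)) = δ := div_mul_cancel₀ δ hb5.ne'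
  obtain ⟨Q, R₁, R₂, hQsa, hR₁sa, hR₂sa, hQS, hR₁c, hR₂c, hpos₁, hpos₂⟩ := hyp ε hε
  set C := ((ContinuousLinearMap.adjoint S).comp Q).comp S with hCdef
  set K₁ := C + ((ContinuousLinearMap.adjoint S).comp R₁).comp S with hK₁def
  set K₂ := C + ((ContinuousLinearMap.adjoint S).comp R₂).comp S with hK₂def
  have hCc : IsCompactOperator C := by
    rw [hCdef, comp_assoc]
    exact cpt_lcomp hQS _
  have hK₁c : IsCompactOperator K₁ := by
    rw [hK₁def]
    refine cpt_add hCc ?_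
    rw [comp_assoc]
    exact cpt_lcomp (cpt_rcomp hR₁c S) _
  have hK₂c : IsCompactOperator K₂ := by
    rw [hK₂def]
    refine cpt_add hCc ?_
    rw [comp_assoc]
    exact cpt_lcomp (cpt_rcomp hR₂c S) _
  set K := K₁ + K₂ with hKdef
  have hKc : IsCompactOperator K := cpt_add hK₁c hK₂c
  set P := X + K₁ + (ε : ℂ) • B with hPdef
  have hP1 : P = ContinuousLinearMap.adjoint S
      ∘L (T + (Q + (ε : ℂ) • (1 : H →L[ℂ] H) + R₁)) ∘L S := by
    ext x
    simp [hPdef, hK₁def, hCdef, hXdef, hBdef, comp_apply, add_apply, smul_apply,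
      one_apply, map_add, map_smul]
    abel
  have hPpos : P.IsPositive := by
    rw [hP1]; exact hpos₁.adjoint_conj S
  set P' := K₂ + (ε : ℂ) • B - X with hP'def
  have hP'1 : P' = ContinuousLinearMap.adjoint S
      ∘L ((Q + (ε : ℂ) • (1 : H →L[ℂ] H) + R₂) - T) ∘L S := by
    ext x
    simp [hP'def, hK₂def, hCdef, hXdef, hBdef, comp_apply, add_apply, sub_apply,
      smul_apply, one_apply, map_add, map_sub, map_smul]
    abel
  have hP'pos : P'.IsPositive := by
    rw [hP'1]; exact hpos₂.adjoint_conj S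
  -- totally bounded cover of the image of the unit ball under K
  have hKcl : IsCompact (closure ((K : H →ₗ[ℂ] H) '' Metric.closedBall 0 1)) := by
    have h1 : IsCompactOperator ((K : H →ₗ[ℂ] H) : H → H) := by
      rwa [ContinuousLinearMap.coe_coe]
    exact h1.isCompact_closure_image_closedBall 1
  have hTB : TotallyBounded ((K : H →ₗ[ℂ] H) '' Metric.closedBall 0 1) :=
    hKcl.totallyBounded.subset subset_closure
  obtain ⟨Y, hYfin, hYcov⟩ := Metric.totallyBounded_iff.mp hTB ε hε
  set W := Submodule.span ℂ Y with hWdef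
  haveI : FiniteDimensional ℂ W := FiniteDimensional.span_of_finite ℂ hYfin
  set π := W.subtypeL.comp (W.orthogonalProjectionOnto) with hπdef
  have hπc : IsCompactOperator π := finproj_compact W
  have hπsa : IsSelfAdjoint π := isSelfAdjoint_starProjection W
  have h1sa : IsSelfAdjoint (1 : H →L[ℂ] H) := by
    first
    | exact IsSelfAdjoint.one _
    | exact IsSelfAdjoint.one
    | exact isSelfAdjoint_one _
  have h1πsa : IsSelfAdjoint (1 - π : H →L[ℂ] H) := h1sa.sub hπsa
  set G := (1 - π) ∘L P ∘L (1 - π) with hGdef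
  have hGpos : G.IsPositive := by
    have h := hPpos.adjoint_conj (1 - π)
    rwa [h1πsa.adjoint_eq] at h
  -- quadratic form bound for G on the unit ball
  have hGnorm : ‖G‖ ≤ ε + 2 * ε * ‖B‖ := by
    have hM : (0:ℝ) ≤ ε + 2 * ε * ‖B‖ := by
      have := mul_nonneg (mul_nonneg (by norm_num : (0:ℝ) ≤ 2) hε.le) (norm_nonneg B)
      linarith [hε.le]
    refine pos_norm_le hGpos hM ?_
    intro x hx
    set η := x - π x with hηdef
    have hηW : η ∈ Wᗮ := by
      exact W.sub_starProjection_mem_orthogonal x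
    have hηx : ‖η‖ ≤ ‖x‖ := by
      have hmem : π x ∈ W := by
        simp only [hπdef, comp_apply]
        exact Submodule.coe_mem _
      have h0 : (inner ℂ (π x) η : ℂ) = 0 := (Submodule.mem_orthogonal W η).mp hηW (π x) hmem
      have h0' : (inner ℂ η (π x) : ℂ) = 0 := by
        rw [← inner_conj_symm, h0, map_zero]
      have hx' : x = η + π x := by rw [hηdef]; abel
      have h1 : (RCLike.re (inner ℂ η x : ℂ)) = ‖η‖ ^ 2 := by
        conv_lhs => rw [hx']
        rw [inner_add_right, h0', add_zero, inner_self_eq_norm_sq]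
      have h2 : ‖η‖ ^ 2 ≤ ‖η‖ * ‖x‖ := by
        rw [← h1]
        exact le_trans (RCLike.re_le_norm _) (norm_inner_le_norm _ _)
      nlinarith [h2, norm_nonneg η, norm_nonneg x]
    have hη1 : ‖η‖ ≤ 1 := le_trans hηx hx
    -- step 1 : re ⟪G x, x⟫ = re ⟪P η, η⟫
    have hstep1 : RCLike.re (inner ℂ (G x) x : ℂ) = RCLike.re (inner ℂ (P η) η : ℂ) := by
      have hsym : ∀ u v : H, (inner ℂ ((1 - π) u) v : ℂ) = inner ℂ u ((1 - π) v) := by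
        intro u v
        exact (isSelfAdjoint_iff_isSymmetric.mp h1πsa) u v
      have hGx : G x = (1 - π) (P ((1 - π) x)) := by
        rw [hGdef]; simp only [comp_apply]
      have hηx2 : (1 - π) x = η := by
        rw [sub_apply, ContinuousLinearMap.one_apply, hηdef]
      rw [hGx, hηx2, hsym (P η) x, hηx2]
    -- pointwise inequalities
    have hXK₂ : RCLike.re (inner ℂ (X η) η : ℂ)
        ≤ RCLike.re (inner ℂ (K₂ η) η : ℂ) + ε * RCLike.re (inner ℂ (B η) η : ℂ) := by
      have h0 := hP'pos.re_inner_nonneg_left η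
      have happ : P' η = K₂ η + (ε : ℂ) • B η - X η := by
        rw [hP'def]; simp only [sub_apply, add_apply, smul_apply]
      have hexp : RCLike.re (inner ℂ (P' η) η : ℂ)
          = RCLike.re (inner ℂ (K₂ η) η : ℂ) + ε * RCLike.re (inner ℂ (B η) η : ℂ)
            - RCLike.re (inner ℂ (X η) η : ℂ) := by
        rw [happ, re_inner_sub_left, re_inner_add_left, re_inner_smul_left']
      rw [hexp] at h0
      linarith
    have hPη : RCLike.re (inner ℂ (P η) η : ℂ)
        = RCLike.re (inner ℂ (X η) η : ℂ) + RCLike.re (inner ℂ (K₁ η) η : ℂ)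
          + ε * RCLike.re (inner ℂ (B η) η : ℂ) := by
      have happ2 : P η = X η + K₁ η + (ε : ℂ) • B η := by
        rw [hPdef]; simp only [add_apply, smul_apply]
      rw [happ2, re_inner_add_left, re_inner_add_left, re_inner_smul_left']
    have hBη : RCLike.re (inner ℂ (B η) η : ℂ) ≤ ‖B‖ := by
      calc RCLike.re (inner ℂ (B η) η : ℂ) ≤ ‖(inner ℂ (B η) η : ℂ)‖ := RCLike.re_le_norm _
      _ ≤ ‖B η‖ * ‖η‖ := norm_inner_le_norm _ _
      _ ≤ (‖B‖ * ‖η‖) * ‖η‖ := by gcongr; exact le_opNorm _ _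
      _ ≤ (‖B‖ * 1) * 1 := by gcongr <;> exact hη1
      _ = ‖B‖ := by ring
    -- cover bound
    have hKη : RCLike.re (inner ℂ (K₁ η) η : ℂ) + RCLike.re (inner ℂ (K₂ η) η : ℂ) ≤ ε := by
      have hmemball : η ∈ Metric.closedBall (0:H) 1 := by
        rw [Metric.mem_closedBall, dist_zero_right]; exact hη1
      have hmem : K η ∈ (K : H →ₗ[ℂ] H) '' Metric.closedBall 0 1 :=
        ⟨η, hmemball, rfl⟩
      have := hYcov hmem
      simp only [Set.mem_iUnion, exists_prop] at this
      obtain ⟨y, hyY, hyball⟩ := this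
      have hyW : (inner ℂ y η : ℂ) = 0 :=
        (Submodule.mem_orthogonal W η).mp hηW y (Submodule.subset_span hyY)
      have hdist : ‖K η - y‖ < ε := by
        rwa [Metric.mem_ball, dist_eq_norm] at hyball
      have h5 : RCLike.re (inner ℂ (K η) η : ℂ) ≤ ε := by
        have heq : (inner ℂ (K η) η : ℂ) = inner ℂ (K η - y) η := by
          rw [inner_sub_left, hyW, sub_zero]
        calc RCLike.re (inner ℂ (K η) η : ℂ) = RCLike.re (inner ℂ (K η - y) η : ℂ) := by rw [heq]
        _ ≤ ‖(inner ℂ (K η - y) η : ℂ)‖ := RCLike.re_le_norm _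
        _ ≤ ‖K η - y‖ * ‖η‖ := norm_inner_le_norm _ _
        _ ≤ ε * 1 := by
            apply mul_le_mul hdist.le hη1 (norm_nonneg _) hε.le
        _ = ε := mul_one ε
      have h6 : RCLike.re (inner ℂ (K η) η : ℂ)
          = RCLike.re (inner ℂ (K₁ η) η : ℂ) + RCLike.re (inner ℂ (K₂ η) η : ℂ) := by
        have happ3 : K η = K₁ η + K₂ η := by rw [hKdef]; simp only [add_apply]
        rw [happ3, re_inner_add_left]
      linarith
    have hεB : ε * RCLike.re (inner ℂ (B η) η : ℂ) ≤ ε * ‖B‖ :=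
      mul_le_mul_of_nonneg_left hBη hε.le
    rw [hstep1, hPη]
    linarith [hXK₂, hKη, hεB]
  -- assemble the compact approximant
  set Kδ := (P ∘L π + π ∘L (P ∘L (1 - π))) - K₁ with hKδdef
  have hKδc : IsCompactOperator Kδ := by
    rw [hKδdef]
    refine cpt_sub (cpt_add ?_ ?_) hK₁c
    · exact cpt_lcomp hπc P
    · exact cpt_rcomp hπc (P ∘L (1 - π))
  have hsplit : π + ((1 : H →L[ℂ] H) - π) = 1 := by abel
  have hPFG : P = (P ∘L π + π ∘L (P ∘L (1 - π))) + G := by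
    rw [hGdef, add_assoc]
    have h2 : π ∘L (P ∘L (1 - π)) + (1 - π) ∘L (P ∘L (1 - π)) = P ∘L (1 - π) := by
      rw [← add_comp, hsplit, one_def, id_comp]
    have h3 : P ∘L π + P ∘L (1 - π) = P := by
      rw [← comp_add, hsplit, one_def, comp_id]
    rw [h2, h3]
  have hdiff : X - Kδ = G - (ε : ℂ) • B := by
    have h1 : (P ∘L π + π ∘L (P ∘L (1 - π))) = P - G := by
      conv_rhs => rw [hPFG]
      abel
    rw [hKδdef, h1, hPdef]
    abel
  refine ⟨Kδ, hKδc, ?_⟩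
  rw [dist_eq_norm, hdiff]
  have hsm : ‖(ε : ℂ) • B‖ = ε * ‖B‖ := by
    rw [norm_smul, Complex.norm_real, Real.norm_eq_abs, abs_of_pos hε]
  calc ‖G - (ε : ℂ) • B‖ ≤ ‖G‖ + ‖(ε : ℂ) • B‖ := norm_sub_le _ _
  _ ≤ (ε + 2 * ε * ‖B‖) + ε * ‖B‖ := by rw [hsm]; linarith [hGnorm]
  _ < δ := by nlinarith [hε, norm_nonneg B, hεδ]
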